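/- Assume Γ* is nonempty. Then v* = inf_{y ∈ cl(Ω)} F_v(y), and this infimum is attained at every point x ∈ Γ*. Moreover, if for every starting point x ∈ cl(Ω) the infima defining T_→d(x) and T_s←(x) are attained by some admissible trajectory (existence of optimal trajectories between any two points), then for x ∈ cl(Ω) one has F_v(x) = v* if and only if x ∈ Γ*. -/

import Mathlib

open Set Metric MeasureTheory
open scoped ENNReal

noncomputable section

/-- Points of the `d`-dimensional Euclidean space. -/
abbrev Pt (d : ℕ) := EuclideanSpace ℝ (Fin d)

/-- A control: a measurable map valued in the unit sphere. -/
def IsControl {d : ℕ} (α : ℝ → Pt d) : Prop :=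
  Measurable α ∧ ∀ t, ‖α t‖ = 1

/-- Admissible trajectory (in integral form, i.e. an absolutely continuous solution of the
controlled ODE) with control `α`, constrained to stay in `K`, with direction sign `σ`
(`σ = 1`: forward dynamics `y' = f(y,α)·α`; `σ = -1`: reverse dynamics `y' = -f(y,α)·α`),
starting at `x`, with horizon `τ`. -/
def IsTrajCtrl {d : ℕ} (K : Set (Pt d)) (f : Pt d → Pt d → ℝ) (σ : ℝ)
    (x : Pt d) (τ : ℝ) (y α : ℝ → Pt d) : Prop :=
  0 ≤ τ ∧ y 0 = x ∧ (∀ t ∈ Icc 0 τ, y t ∈ K) ∧ IsControl α ∧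
    ∀ t ∈ Icc 0 τ, y t = x + ∫ s in (0:ℝ)..t, (σ * f (y s) (α s)) • α s

/-- Admissible trajectory, for some control. -/
def IsTraj {d : ℕ} (K : Set (Pt d)) (f : Pt d → Pt d → ℝ) (σ : ℝ)
    (x : Pt d) (τ : ℝ) (y : ℝ → Pt d) : Prop :=
  ∃ α, IsTrajCtrl K f σ x τ y α

/-- Set of horizons of admissible trajectories from `x` ending in `target`. -/
def reachTimes {d : ℕ} (K : Set (Pt d)) (f : Pt d → Pt d → ℝ) (σ : ℝ)
    (target : Set (Pt d)) (x : Pt d) : Set ℝ :=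
  {τ | ∃ y : ℝ → Pt d, IsTraj K f σ x τ y ∧ y τ ∈ target}

/-- Minimum time, `∞` if the target is unreachable (`inf ∅ = ∞`). -/
def minTime {d : ℕ} (K : Set (Pt d)) (f : Pt d → Pt d → ℝ) (σ : ℝ)
    (target : Set (Pt d)) (x : Pt d) : ℝ≥0∞ :=
  ⨅ τ ∈ reachTimes K f σ target x, ENNReal.ofReal τ

/-- Kruzkov transform `1 - e^{-T}`, with the convention `e^{-∞} = 0`. -/
def kruzkov (T : ℝ≥0∞) : ℝ := if T = ∞ then 1 else 1 - Real.exp (-T.toReal)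

/-- Value function (Kruzkov transform of the minimum time). -/
def val {d : ℕ} (K : Set (Pt d)) (f : Pt d → Pt d → ℝ) (σ : ℝ)
    (target : Set (Pt d)) (x : Pt d) : ℝ :=
  kruzkov (minTime K f σ target x)

/-- Geodesic points from `x`: points `y(t)` of optimal trajectories from `x` to `target`. -/
def geodPts {d : ℕ} (K : Set (Pt d)) (f : Pt d → Pt d → ℝ) (σ : ℝ)
    (target : Set (Pt d)) (x : Pt d) : Set (Pt d) :=
  {p | ∃ τ y, IsTraj K f σ x τ y ∧ y τ ∈ target ∧
    ENNReal.ofReal τ = minTime K f σ target x ∧ ∃ t ∈ Icc 0 τ, p = y t}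

/-- δ-geodesic points from `x`: points `y(t)` of δ-optimal trajectories from `x` to `target`. -/
def deltaGeodPts {d : ℕ} (K : Set (Pt d)) (f : Pt d → Pt d → ℝ) (σ : ℝ)
    (target : Set (Pt d)) (x : Pt d) (δ : ℝ) : Set (Pt d) :=
  {p | ∃ τ y, IsTraj K f σ x τ y ∧ y τ ∈ target ∧
    1 - Real.exp (-τ) ≤ val K f σ target x + δ ∧ ∃ t ∈ Icc 0 τ, p = y t}

/-- The setting of the minimum time problem: a nonempty bounded open domain `Ω ⊆ ℝ^d` with
`d ≥ 1`, a positive continuous bounded Lipschitz speed function `f` on `cl(Ω) × S₁`, and two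
disjoint nonempty compact subsets `K_src, K_dst` of `Ω`. -/
structure Setting (d : ℕ) where
  Ω : Set (Pt d)
  f : Pt d → Pt d → ℝ
  Mf : ℝ
  Lf : ℝ
  Lfa : ℝ
  Ksrc : Set (Pt d)
  Kdst : Set (Pt d)
  hd : 1 ≤ d
  hΩopen : IsOpen Ω
  hΩbdd : Bornology.IsBounded Ω
  hΩne : Ω.Nonempty
  hfcont : ContinuousOn (fun p : Pt d × Pt d => f p.1 p.2) (closure Ω ×ˢ sphere (0 : Pt d) 1)
  hfpos : ∀ x ∈ closure Ω, ∀ a ∈ sphere (0 : Pt d) 1, 0 < f x a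
  hfbdd : ∀ x ∈ closure Ω, ∀ a ∈ sphere (0 : Pt d) 1, f x a ≤ Mf
  hfLipx : ∀ a ∈ sphere (0 : Pt d) 1, ∀ x ∈ closure Ω, ∀ x' ∈ closure Ω,
    |f x a - f x' a| ≤ Lf * ‖x - x'‖
  hfLipa : ∀ x ∈ closure Ω, ∀ a ∈ sphere (0 : Pt d) 1, ∀ a' ∈ sphere (0 : Pt d) 1,
    |f x a - f x a'| ≤ Lfa * ‖a - a'‖
  hKsrcComp : IsCompact Ksrc
  hKdstComp : IsCompact Kdst
  hKsrcNe : Ksrc.Nonempty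
  hKdstNe : Kdst.Nonempty
  hKsrcSub : Ksrc ⊆ Ω
  hKdstSub : Kdst ⊆ Ω
  hKdisj : Disjoint Ksrc Kdst

namespace Setting

variable {d : ℕ} (S : Setting d)

/-- Minimum time to destination `T_→d`. -/
def Td (x : Pt d) : ℝ≥0∞ := minTime (closure S.Ω) S.f 1 S.Kdst x

/-- Minimum time from source `T_s←` (reverse dynamics). -/
def Ts (x : Pt d) : ℝ≥0∞ := minTime (closure S.Ω) S.f (-1) S.Ksrc x

/-- Value function to destination `v_→d = 1 - e^{-T_→d}`. -/
def vd (x : Pt d) : ℝ := val (closure S.Ω) S.f 1 S.Kdst x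

/-- Value function from source `v_s← = 1 - e^{-T_s←}`. -/
def vs (x : Pt d) : ℝ := val (closure S.Ω) S.f (-1) S.Ksrc x

/-- State-constrained value function to destination: trajectories confined to `K`. -/
def vdC (K : Set (Pt d)) (x : Pt d) : ℝ := val K S.f 1 S.Kdst x

/-- State-constrained value function from source: trajectories confined to `K`. -/
def vsC (K : Set (Pt d)) (x : Pt d) : ℝ := val K S.f (-1) S.Ksrc x

/-- `F_v(x) = v_s←(x) + v_→d(x) − v_s←(x)·v_→d(x)`. -/
def Fv (x : Pt d) : ℝ := S.vs x + S.vd x - S.vs x * S.vd x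

/-- The neighborhood `O_η` of the optimal trajectories. -/
def Oset (η : ℝ) : Set (Pt d) :=
  {x ∈ S.Ω \ (S.Ksrc ∪ S.Kdst) | S.Fv x < sInf (S.Fv '' S.Ω) + η}

/-- `X_src = Argmin_{x ∈ K_src} v_→d(x)`. -/
def Xsrc : Set (Pt d) := {x ∈ S.Ksrc | ∀ z ∈ S.Ksrc, S.vd x ≤ S.vd z}

/-- `X_dst = Argmin_{x ∈ K_dst} v_s←(x)`. -/
def Xdst : Set (Pt d) := {x ∈ S.Kdst | ∀ z ∈ S.Kdst, S.vs x ≤ S.vs z}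

/-- The set of forward geodesic points `∪_{x ∈ X_src} Γ*_x`. -/
def GammaFwd : Set (Pt d) := ⋃ x ∈ S.Xsrc, geodPts (closure S.Ω) S.f 1 S.Kdst x

/-- The set of reverse geodesic points `∪_{x ∈ X_dst} Γ̃*_x`. -/
def GammaRev : Set (Pt d) := ⋃ x ∈ S.Xdst, geodPts (closure S.Ω) S.f (-1) S.Ksrc x

/-- `v* = inf_{x ∈ K_src} v_→d(x)`. -/
def vStar : ℝ := sInf (S.vd '' S.Ksrc)

/-- `X_src^δ = {x ∈ ∂K_src : v_→d(x) ≤ v* + δ}`. -/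
def XsrcD (δ : ℝ) : Set (Pt d) := {x ∈ frontier S.Ksrc | S.vd x ≤ S.vStar + δ}

/-- `X_dst^δ = {x ∈ ∂K_dst : v_s←(x) ≤ v* + δ}`. -/
def XdstD (δ : ℝ) : Set (Pt d) := {x ∈ frontier S.Kdst | S.vs x ≤ S.vStar + δ}

/-- The set of forward δ-geodesic points `Γ^δ`. -/
def GammaD (δ : ℝ) : Set (Pt d) :=
  ⋃ δ' ∈ Icc (0:ℝ) δ, ⋃ x ∈ S.XsrcD (δ - δ'), deltaGeodPts (closure S.Ω) S.f 1 S.Kdst x δ'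

/-- The set of reverse δ-geodesic points. -/
def GammaDRev (δ : ℝ) : Set (Pt d) :=
  ⋃ δ' ∈ Icc (0:ℝ) δ, ⋃ x ∈ S.XdstD (δ - δ'), deltaGeodPts (closure S.Ω) S.f (-1) S.Ksrc x δ'

end Setting

section AuxLemmas

lemma kruzkov_nonneg (T : ℝ≥0∞) : 0 ≤ kruzkov T := by
  unfold kruzkov
  split
  · norm_num
  · have : Real.exp (-T.toReal) ≤ 1 := by
      rw [Real.exp_le_one_iff]
      simp [ENNReal.toReal_nonneg]
    linarith

lemma kruzkov_le_one (T : ℝ≥0∞) : kruzkov T ≤ 1 := by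
  unfold kruzkov
  split
  · exact le_rfl
  · have := Real.exp_pos (-T.toReal); linarith

lemma kruzkov_lt_one {T : ℝ≥0∞} (h : T ≠ ∞) : kruzkov T < 1 := by
  unfold kruzkov
  rw [if_neg h]
  have := Real.exp_pos (-T.toReal); linarith

lemma kruzkov_mono {T T' : ℝ≥0∞} (h : T ≤ T') : kruzkov T ≤ kruzkov T' := by
  by_cases h' : T' = ∞
  · rw [h']; simpa [kruzkov] using kruzkov_le_one T
  · have hT : T ≠ ∞ := fun hT => h' (by simpa [hT] using h)
    unfold kruzkov
    rw [if_neg h', if_neg hT]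
    have := ENNReal.toReal_mono h' h
    have := Real.exp_le_exp.mpr (neg_le_neg this)
    linarith

lemma kruzkov_ofReal {τ : ℝ} (hτ : 0 ≤ τ) : kruzkov (ENNReal.ofReal τ) = 1 - Real.exp (-τ) := by
  unfold kruzkov
  rw [if_neg ENNReal.ofReal_ne_top, ENNReal.toReal_ofReal hτ]

lemma kruzkov_inj {T T' : ℝ≥0∞} (h : kruzkov T = kruzkov T') : T = T' := by
  by_cases hT : T = ∞ <;> by_cases hT' : T' = ∞
  · rw [hT, hT']
  · exfalso
    have h1 : kruzkov T = 1 := by simp [kruzkov, hT]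
    have := kruzkov_lt_one hT'
    rw [h1] at h; linarith
  · exfalso
    have h1 : kruzkov T' = 1 := by simp [kruzkov, hT']
    have := kruzkov_lt_one hT
    rw [h1] at h; linarith
  · unfold kruzkov at h
    rw [if_neg hT, if_neg hT'] at h
    have : Real.exp (-T.toReal) = Real.exp (-T'.toReal) := by linarith
    have h2 : T.toReal = T'.toReal := by
      have := Real.exp_injective this; linarith [neg_injective this]
    exact (ENNReal.toReal_eq_toReal_iff' hT hT').mp h2

variable {d : ℕ} {K : Set (Pt d)} {f : Pt d → Pt d → ℝ} {σ x τ : _} {y α : ℝ → Pt d}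

lemma reachTimes_nonneg {tgt : Set (Pt d)} {τ : ℝ}
    (h : τ ∈ reachTimes K f σ tgt x) : 0 ≤ τ := by
  obtain ⟨y, ⟨α, h⟩, -⟩ := h
  exact h.1

lemma minTime_le {tgt : Set (Pt d)} {τ : ℝ} (h : τ ∈ reachTimes K f σ tgt x) :
    minTime K f σ tgt x ≤ ENNReal.ofReal τ :=
  iInf₂_le τ h

lemma val_le_of_mem {tgt : Set (Pt d)} {τ : ℝ} (h : τ ∈ reachTimes K f σ tgt x) :
    val K f σ tgt x ≤ 1 - Real.exp (-τ) := by
  have h0 := reachTimes_nonneg h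
  calc val K f σ tgt x ≤ kruzkov (ENNReal.ofReal τ) := kruzkov_mono (minTime_le h)
    _ = 1 - Real.exp (-τ) := kruzkov_ofReal h0

lemma exists_approx {tgt : Set (Pt d)} (hv : val K f σ tgt x < 1) {ε : ℝ} (hε : 0 < ε) :
    ∃ τ ∈ reachTimes K f σ tgt x, 1 - Real.exp (-τ) < val K f σ tgt x + ε := by
  set T := minTime K f σ tgt x with hTdef
  have hT : T ≠ ∞ := by
    intro h
    rw [show val K f σ tgt x = kruzkov T from rfl, h] at hv
    simp [kruzkov] at hv
  set a := Real.exp (-T.toReal) with ha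
  have hval : val K f σ tgt x = 1 - a := by
    rw [show val K f σ tgt x = kruzkov T from rfl, kruzkov, if_neg hT]
  have ha1 : a ≤ 1 := by
    rw [ha, Real.exp_le_one_iff]; simp [ENNReal.toReal_nonneg]
  set δ := ε / 2 with hδdef
  have hδ : 0 < δ := by positivity
  -- key bound : exp (-(T.toReal + δ)) > a - ε
  have hkey : a - ε < Real.exp (-(T.toReal + δ)) := by
    have h1 : Real.exp (-(T.toReal + δ)) = a * Real.exp (-δ) := by
      rw [ha, ← Real.exp_add]; ring_nf
    have h2 : 1 - δ ≤ Real.exp (-δ) := by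
      have := Real.add_one_le_exp (-δ); linarith
    have h3 : 0 < a := Real.exp_pos _
    nlinarith
  have hlt : T < T + ENNReal.ofReal δ :=
    ENNReal.lt_add_right hT (by simp [ENNReal.ofReal_pos.mpr hδ, ne_of_gt])
  rw [hTdef] at hlt
  conv_lhs at hlt => rw [minTime]
  rw [iInf_lt_iff] at hlt
  obtain ⟨τ, hlt⟩ := hlt
  rw [iInf_lt_iff] at hlt
  obtain ⟨hτR, hlt⟩ := hlt
  rw [← hTdef] at hlt
  have hτ0 : 0 ≤ τ := reachTimes_nonneg hτR
  have htoReal : τ < T.toReal + δ := by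
    have h2 : (T + ENNReal.ofReal δ) ≠ ∞ := by
      simp [hT, ENNReal.ofReal_ne_top]
    have := (ENNReal.toReal_lt_toReal ENNReal.ofReal_ne_top h2).mpr hlt
    rwa [ENNReal.toReal_ofReal hτ0, ENNReal.toReal_add hT ENNReal.ofReal_ne_top,
      ENNReal.toReal_ofReal hδ.le] at this
  refine ⟨τ, hτR, ?_⟩
  have : Real.exp (-(T.toReal + δ)) < Real.exp (-τ) := by
    apply Real.exp_lt_exp.mpr; linarith
  rw [hval]
  linarith

lemma traj_restrict {τ t : ℝ} (h : IsTrajCtrl K f σ x τ y α) (ht : t ∈ Icc 0 τ) :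
    IsTrajCtrl K f σ x t y α := by
  obtain ⟨hτ, h0, hmem, hctrl, hint⟩ := h
  exact ⟨ht.1, h0, fun s hs => hmem s ⟨hs.1, hs.2.trans ht.2⟩, hctrl,
    fun s hs => hint s ⟨hs.1, hs.2.trans ht.2⟩⟩

lemma traj_reverse {τ : ℝ} (h : IsTrajCtrl K f σ x τ y α)
    (hInt : IntervalIntegrable (fun s => (σ * f (y s) (α s)) • α s) volume 0 τ) :
    IsTrajCtrl K f (-σ) (y τ) τ (fun s => y (τ - s)) (fun s => α (τ - s)) := by
  obtain ⟨hτ, h0, hmem, ⟨hαm, hαn⟩, hint⟩ := h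
  set g : ℝ → Pt d := fun s => (σ * f (y s) (α s)) • α s with hg
  refine ⟨hτ, by simp, fun t ht => hmem _ ⟨by linarith [ht.2], by linarith [ht.1]⟩,
    ⟨hαm.comp (measurable_const.sub measurable_id), fun t => hαn _⟩, fun t ht => ?_⟩
  have hsub : t ∈ Icc 0 τ := ht
  have hmemτ : τ ∈ Icc (0:ℝ) τ := ⟨hτ, le_rfl⟩
  have hmem' : τ - t ∈ Icc (0:ℝ) τ := ⟨by linarith [hsub.2], by linarith [hsub.1]⟩
  have heq : ∀ s : ℝ, ((-σ) * f (y (τ - s)) (α (τ - s))) • α (τ - s) = -(g (τ - s)) := by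
    intro s; rw [hg]; simp [neg_mul, neg_smul]
  have h1 : (∫ s in (0:ℝ)..t, ((-σ) * f (y (τ - s)) (α (τ - s))) • α (τ - s))
      = -(∫ s in (0:ℝ)..t, g (τ - s)) := by
    rw [← intervalIntegral.integral_neg]
    exact intervalIntegral.integral_congr fun s _ => heq s
  have h2 : (∫ s in (0:ℝ)..t, g (τ - s)) = ∫ s in (τ - t)..(τ - 0), g s :=
    intervalIntegral.integral_comp_sub_left g τ
  have hInt' : IntervalIntegrable g volume 0 (τ - t) := by
    apply hInt.mono_set
    rw [uIcc_of_le hmem'.1, uIcc_of_le hτ]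
    exact Icc_subset_Icc le_rfl hmem'.2
  have h3 : (∫ s in (0:ℝ)..τ, g s) - ∫ s in (0:ℝ)..(τ - t), g s = ∫ s in (τ - t)..τ, g s :=
    intervalIntegral.integral_interval_sub_left hInt hInt'
  have h4 : y τ = x + ∫ s in (0:ℝ)..τ, g s := hint τ hmemτ
  have h5 : y (τ - t) = x + ∫ s in (0:ℝ)..(τ - t), g s := hint _ hmem'
  beta_reduce
  rw [h1, h2, sub_zero, ← h3, h4, h5]
  abel

lemma traj_shift {τ t : ℝ} (h : IsTrajCtrl K f σ x τ y α)
    (hInt : IntervalIntegrable (fun s => (σ * f (y s) (α s)) • α s) volume 0 τ)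
    (ht : t ∈ Icc 0 τ) :
    IsTrajCtrl K f σ (y t) (τ - t) (fun s => y (t + s)) (fun s => α (t + s)) := by
  obtain ⟨hτ, h0, hmem, ⟨hαm, hαn⟩, hint⟩ := h
  set g : ℝ → Pt d := fun s => (σ * f (y s) (α s)) • α s with hg
  refine ⟨by linarith [ht.2], by simp, fun s hs => hmem _ ⟨by linarith [hs.1, ht.1], by linarith [hs.2]⟩,
    ⟨hαm.comp (measurable_const.add measurable_id), fun s => hαn _⟩, fun s hs => ?_⟩
  have hts : t + s ∈ Icc 0 τ := ⟨by linarith [hs.1, ht.1], by linarith [hs.2]⟩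
  have h1 : (∫ u in (0:ℝ)..s, (σ * f (y (t + u)) (α (t + u))) • α (t + u))
      = ∫ u in (0:ℝ)..s, g (t + u) := rfl
  have h2 : (∫ u in (0:ℝ)..s, g (t + u)) = ∫ u in (t + 0)..(t + s), g u :=
    intervalIntegral.integral_comp_add_left g t
  have hI1 : IntervalIntegrable g volume 0 (t + s) := by
    apply hInt.mono_set
    rw [uIcc_of_le (by linarith [hs.1, ht.1] : (0:ℝ) ≤ t + s), uIcc_of_le hτ]
    exact Icc_subset_Icc le_rfl hts.2
  have hI2 : IntervalIntegrable g volume 0 t := by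
    apply hInt.mono_set
    rw [uIcc_of_le ht.1, uIcc_of_le hτ]
    exact Icc_subset_Icc le_rfl ht.2
  have h3 : (∫ u in (0:ℝ)..(t + s), g u) - ∫ u in (0:ℝ)..t, g u = ∫ u in t..(t + s), g u :=
    intervalIntegral.integral_interval_sub_left hI1 hI2
  have h4 : y (t + s) = x + ∫ u in (0:ℝ)..(t + s), g u := hint _ hts
  have h5 : y t = x + ∫ u in (0:ℝ)..t, g u := hint _ ht
  beta_reduce
  rw [h1, h2, add_zero, ← h3, h4, h5]
  abel

lemma traj_concat {τ₁ τ₂ : ℝ} {y₁ α₁ y₂ α₂ : ℝ → Pt d}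
    (h₁ : IsTrajCtrl K f σ x τ₁ y₁ α₁) (h₂ : IsTrajCtrl K f σ (y₁ τ₁) τ₂ y₂ α₂)
    (hInt₁ : IntervalIntegrable (fun s => (σ * f (y₁ s) (α₁ s)) • α₁ s) volume 0 τ₁)
    (hInt₂ : IntervalIntegrable (fun s => (σ * f (y₂ s) (α₂ s)) • α₂ s) volume 0 τ₂) :
    IsTrajCtrl K f σ x (τ₁ + τ₂) (fun s => if s ≤ τ₁ then y₁ s else y₂ (s - τ₁))
      (fun s => if s ≤ τ₁ then α₁ s else α₂ (s - τ₁)) ∧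
    (fun s => if s ≤ τ₁ then y₁ s else y₂ (s - τ₁)) (τ₁ + τ₂) = y₂ τ₂ := by
  obtain ⟨hτ₁, h01, hmem₁, ⟨hαm₁, hαn₁⟩, hint₁⟩ := h₁
  obtain ⟨hτ₂, h02, hmem₂, ⟨hαm₂, hαn₂⟩, hint₂⟩ := h₂
  set Y : ℝ → Pt d := fun s => if s ≤ τ₁ then y₁ s else y₂ (s - τ₁) with hY
  set A : ℝ → Pt d := fun s => if s ≤ τ₁ then α₁ s else α₂ (s - τ₁) with hA
  set g₁ : ℝ → Pt d := fun s => (σ * f (y₁ s) (α₁ s)) • α₁ s with hg₁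
  set g₂ : ℝ → Pt d := fun s => (σ * f (y₂ s) (α₂ s)) • α₂ s with hg₂
  set G : ℝ → Pt d := fun s => (σ * f (Y s) (A s)) • A s with hG
  have hGeq : ∀ s, G s = if s ≤ τ₁ then g₁ s else g₂ (s - τ₁) := by
    intro s
    by_cases hs : s ≤ τ₁ <;> simp [hG, hY, hA, hs, hg₁, hg₂]
  have hend : Y (τ₁ + τ₂) = y₂ τ₂ := by
    by_cases hc : τ₁ + τ₂ ≤ τ₁
    · have hτ₂0 : τ₂ = 0 := le_antisymm (by linarith) hτ₂
      subst hτ₂0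
      simpa [hY] using h02.symm
    · simp [hY, if_neg hc]
  refine ⟨⟨by linarith, ?_, ?_, ⟨?_, ?_⟩, ?_⟩, hend⟩
  · simp only [hY, if_pos hτ₁]; exact h01
  · intro s hs
    by_cases hc : s ≤ τ₁
    · simp only [hY, if_pos hc]; exact hmem₁ s ⟨hs.1, hc⟩
    · simp only [hY, if_neg hc]
      exact hmem₂ _ ⟨by linarith [not_le.mp hc], by linarith [hs.2]⟩
  · exact Measurable.ite measurableSet_Iic hαm₁ (hαm₂.comp (measurable_id.sub measurable_const))
  · intro t; by_cases hc : t ≤ τ₁ <;> simp [hA, hc, hαn₁, hαn₂]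
  · intro t ht
    by_cases hc : t ≤ τ₁
    · have : (∫ s in (0:ℝ)..t, G s) = ∫ s in (0:ℝ)..t, g₁ s := by
        apply intervalIntegral.integral_congr
        intro s hs
        rw [uIcc_of_le ht.1] at hs
        rw [hGeq s, if_pos (hs.2.trans hc)]
      simp only [hY, if_pos hc]
      rw [this]
      exact hint₁ t ⟨ht.1, hc⟩
    · push_neg at hc
      have htt : t - τ₁ ∈ Icc 0 τ₂ := ⟨by linarith, by linarith [ht.2]⟩
      have hG1 : IntervalIntegrable G volume 0 τ₁ := by
        rw [intervalIntegrable_iff] at hInt₁ ⊢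
        apply hInt₁.congr_fun _ measurableSet_uIoc
        intro s hs
        rw [uIoc_of_le hτ₁] at hs
        rw [hGeq s, if_pos hs.2]
      have hG2 : IntervalIntegrable G volume τ₁ t := by
        have h1 : IntervalIntegrable g₂ volume 0 (t - τ₁) := by
          apply hInt₂.mono_set
          rw [uIcc_of_le htt.1, uIcc_of_le hτ₂]
          exact Icc_subset_Icc le_rfl htt.2
        have h2 := h1.comp_sub_right τ₁
        simp only [zero_add, sub_add_cancel] at h2
        rw [intervalIntegrable_iff] at h2 ⊢
        apply h2.congr_fun _ measurableSet_uIoc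
        intro s hs
        rw [uIoc_of_le hc.le] at hs
        rw [hGeq s, if_neg (not_le.mpr hs.1)]
      have hsplit : (∫ s in (0:ℝ)..τ₁, G s) + ∫ s in τ₁..t, G s = ∫ s in (0:ℝ)..t, G s :=
        intervalIntegral.integral_add_adjacent_intervals hG1 hG2
      have hA1 : (∫ s in (0:ℝ)..τ₁, G s) = ∫ s in (0:ℝ)..τ₁, g₁ s := by
        apply intervalIntegral.integral_congr
        intro s hs
        rw [uIcc_of_le hτ₁] at hs
        rw [hGeq s, if_pos hs.2]
      have hA2 : (∫ s in τ₁..t, G s) = ∫ s in τ₁..t, g₂ (s - τ₁) := by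
        apply intervalIntegral.integral_congr_ae
        apply Filter.Eventually.of_forall
        intro s hs
        rw [uIoc_of_le hc.le] at hs
        rw [hGeq s, if_neg (not_le.mpr hs.1)]
      have hA3 : (∫ s in τ₁..t, g₂ (s - τ₁)) = ∫ s in (τ₁ - τ₁)..(t - τ₁), g₂ s :=
        intervalIntegral.integral_comp_sub_right g₂ τ₁
      have hy1 : y₁ τ₁ = x + ∫ s in (0:ℝ)..τ₁, g₁ s := hint₁ τ₁ ⟨hτ₁, le_rfl⟩
      have hy2 : y₂ (t - τ₁) = y₁ τ₁ + ∫ s in (0:ℝ)..(t - τ₁), g₂ s := hint₂ _ htt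
      simp only [hY, if_neg (not_le.mpr hc)]
      rw [← hsplit, hA1, hA2, hA3, sub_self, hy2, hy1]
      abel

lemma Setting.exists_speed_extension {d : ℕ} (S : Setting d) :
    ∃ F : Pt d × Pt d → ℝ, Continuous F ∧
      ∀ p ∈ (closure S.Ω) ×ˢ sphere (0 : Pt d) 1, F p = S.f p.1 p.2 := by
  have hD : IsClosed ((closure S.Ω) ×ˢ sphere (0 : Pt d) 1) :=
    isClosed_closure.prod isClosed_sphere
  have hcont : Continuous (((closure S.Ω) ×ˢ sphere (0 : Pt d) 1).restrict
      (fun p : Pt d × Pt d => S.f p.1 p.2)) := S.hfcont.restrict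
  obtain ⟨g, hg⟩ := ContinuousMap.exists_restrict_eq hD ⟨_, hcont⟩
  refine ⟨g, g.continuous, fun p hp => ?_⟩
  have := congrFun (congrArg ContinuousMap.toFun hg) ⟨p, hp⟩
  exact this

lemma Setting.traj_integrable {d : ℕ} (S : Setting d) {σ : ℝ} {x : Pt d} {τ : ℝ}
    {y α : ℝ → Pt d} (h : IsTrajCtrl (closure S.Ω) S.f σ x τ y α) :
    IntervalIntegrable (fun s => (σ * S.f (y s) (α s)) • α s) volume 0 τ := by
  obtain ⟨F, hFc, hFeq⟩ := S.exists_speed_extension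
  obtain ⟨hτ, h0, hmem, ⟨hαm, hαn⟩, hint⟩ := h
  set g : ℝ → Pt d := fun s => (σ * S.f (y s) (α s)) • α s with hg
  have hαsm : AEStronglyMeasurable α (volume : Measure ℝ) := hαm.aestronglyMeasurable
  have hα_sph : ∀ s : ℝ, α s ∈ sphere (0 : Pt d) 1 := fun s =>
    mem_sphere_zero_iff_norm.mpr (hαn s)
  have hbd : ∀ s ∈ Icc (0:ℝ) τ, ‖g s‖ ≤ |σ| * S.Mf := by
    intro s hs
    have hys := hmem s hs
    have hf1 : 0 < S.f (y s) (α s) := S.hfpos _ hys _ (hα_sph s)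
    have hf2 : S.f (y s) (α s) ≤ S.Mf := S.hfbdd _ hys _ (hα_sph s)
    rw [hg]
    simp only [norm_smul, hαn s, mul_one, Real.norm_eq_abs, abs_mul]
    rw [abs_of_pos hf1]
    exact mul_le_mul_of_nonneg_left hf2 (abs_nonneg σ)
  have hcomp : ∀ s : Set ℝ, MeasurableSet s → s ⊆ Icc 0 τ →
      AEStronglyMeasurable y (volume.restrict s) →
      AEStronglyMeasurable g (volume.restrict s) := by
    intro s hsm hssub hysm
    have hpair : AEStronglyMeasurable (fun t => (y t, α t)) (volume.restrict s) :=
      hysm.prodMk (hαsm.mono_measure Measure.restrict_le_self)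
    have hFcomp : AEStronglyMeasurable (fun t => F (y t, α t)) (volume.restrict s) :=
      hFc.comp_aestronglyMeasurable hpair
    have heq : ∀ᵐ t ∂(volume.restrict s), F (y t, α t) = S.f (y t) (α t) := by
      filter_upwards [ae_restrict_mem hsm] with t ht
      exact hFeq (y t, α t) (mk_mem_prod (hmem t (hssub ht)) (hα_sph t))
    have hfsm : AEStronglyMeasurable (fun t => S.f (y t) (α t)) (volume.restrict s) :=
      hFcomp.congr heq
    exact (aestronglyMeasurable_const.mul hfsm).smul
      (hαsm.mono_measure Measure.restrict_le_self)
  set A := {t : ℝ | t ∈ Icc 0 τ ∧ IntervalIntegrable g volume 0 t} with hA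
  have hA0 : (0:ℝ) ∈ A := ⟨⟨le_rfl, hτ⟩, by simp [intervalIntegrable_iff]⟩
  have hAbdd : BddAbove A := ⟨τ, fun t ht => ht.1.2⟩
  have hAne : A.Nonempty := ⟨0, hA0⟩
  set c := sSup A with hc
  have hc0 : 0 ≤ c := le_csSup hAbdd hA0
  have hcτ : c ≤ τ := csSup_le hAne fun t ht => ht.1.2
  have hmemA : ∀ t, 0 ≤ t → t < c → IntervalIntegrable g volume 0 t := by
    intro t ht0 htc
    obtain ⟨u, huA, htu⟩ := exists_lt_of_lt_csSup hAne htc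
    apply huA.2.mono_set
    rw [uIcc_of_le ht0, uIcc_of_le (ht0.trans htu.le)]
    exact Icc_subset_Icc le_rfl htu.le
  have hIoc : IntegrableOn g (Ioc 0 c) volume := by
    have hIoo : IntegrableOn g (Ioo 0 c) volume := by
      rcases eq_or_lt_of_le hc0 with hceq | hcpos
      · simp [← hceq]
      · have hUsub : Ioo 0 c ⊆ ⋃ n : ℕ, Ioc 0 (c - c / (n + 1)) := by
          intro t ht
          have hct : 0 < c - t := by linarith [ht.2]
          obtain ⟨n, hn⟩ := exists_nat_one_div_lt (div_pos hct hcpos)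
          refine mem_iUnion.mpr ⟨n, ht.1, ?_⟩
          have h2 : c * (1 / ((n : ℝ) + 1)) < c * ((c - t) / c) :=
            mul_lt_mul_of_pos_left hn hcpos
          have h3 : c * ((c - t) / c) = c - t := by field_simp
          have h4 : c * (1 / ((n : ℝ) + 1)) = c / ((n : ℝ) + 1) := by ring
          rw [h3, h4] at h2
          linarith
        have hsm : AEStronglyMeasurable g
            (volume.restrict (⋃ n : ℕ, Ioc 0 (c - c / ((n : ℝ) + 1)))) := by
          rw [aestronglyMeasurable_iUnion_iff]
          intro n
          have hdivpos : 0 < c / ((n : ℝ) + 1) := by positivity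
          have hdivle : c / ((n : ℝ) + 1) ≤ c := by
            rw [div_le_iff₀ (by positivity : (0:ℝ) < (n : ℝ) + 1)]
            nlinarith [Nat.cast_nonneg (α := ℝ) n]
          have hn0 : 0 ≤ c - c / ((n : ℝ) + 1) := by linarith
          have hnc : c - c / ((n : ℝ) + 1) < c := by linarith
          have hInt_n : IntervalIntegrable g volume 0 (c - c / ((n : ℝ) + 1)) :=
            hmemA _ hn0 hnc
          exact ((intervalIntegrable_iff_integrableOn_Ioc_of_le hn0).mp
            hInt_n).aestronglyMeasurable
        have hsm' : AEStronglyMeasurable g (volume.restrict (Ioo 0 c)) :=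
          hsm.mono_measure (Measure.restrict_mono hUsub le_rfl)
        apply Integrable.mono' (integrableOn_const (C := |σ| * S.Mf) measure_Ioo_lt_top.ne) hsm'
        filter_upwards [ae_restrict_mem measurableSet_Ioo] with t ht
        exact hbd t ⟨ht.1.le, ht.2.le.trans hcτ⟩
    have hres := Measure.restrict_congr_set (μ := (volume : Measure ℝ)) (Ioo_ae_eq_Ioc (a := (0:ℝ)) (b := c))
    unfold IntegrableOn at hIoo ⊢
    rwa [hres] at hIoo
  have hcA : IntervalIntegrable g volume 0 c :=
    (intervalIntegrable_iff_integrableOn_Ioc_of_le hc0).mpr hIoc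
  have hyIoc0c : AEStronglyMeasurable y (volume.restrict (Ioc 0 c)) := by
    have hφ0 := intervalIntegral.continuousOn_primitive_interval' hcA
      (a := 0) left_mem_uIcc
    rw [uIcc_of_le hc0] at hφ0
    have hφ : ContinuousOn (fun t => x + ∫ s in (0:ℝ)..t, g s) (Icc 0 c) :=
      continuousOn_const.add hφ0
    have hyc : ContinuousOn y (Icc 0 c) :=
      hφ.congr fun t ht => hint t ⟨ht.1, ht.2.trans hcτ⟩
    exact (hyc.aestronglyMeasurable measurableSet_Icc).mono_measure
      (Measure.restrict_mono Ioc_subset_Icc_self le_rfl)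
  have hyIoccτ : AEStronglyMeasurable y (volume.restrict (Ioc c τ)) := by
    have hyconst : ∀ t ∈ Ioc c τ, y t = x := by
      intro t ht
      have hni : ¬ IntervalIntegrable g volume 0 t := by
        intro hi
        have : t ∈ A := ⟨⟨hc0.trans ht.1.le, ht.2⟩, hi⟩
        exact absurd (le_csSup hAbdd this) (not_le.mpr ht.1)
      have := hint t ⟨hc0.trans ht.1.le, ht.2⟩
      rw [intervalIntegral.integral_undef hni] at this
      simpa using this
    refine (aestronglyMeasurable_const (b := x)).congr ?_
    filter_upwards [ae_restrict_mem measurableSet_Ioc] with t ht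
    exact (hyconst t ht).symm
  have hyIoc : AEStronglyMeasurable y (volume.restrict (Ioc 0 τ)) := by
    rw [← Ioc_union_Ioc_eq_Ioc hc0 hcτ, aestronglyMeasurable_union_iff]
    exact ⟨hyIoc0c, hyIoccτ⟩
  have hgsm := hcomp (Ioc 0 τ) measurableSet_Ioc Ioc_subset_Icc_self hyIoc
  rw [intervalIntegrable_iff_integrableOn_Ioc_of_le hτ]
  apply Integrable.mono' (integrableOn_const (C := |σ| * S.Mf) measure_Ioc_lt_top.ne) hgsm
  filter_upwards [ae_restrict_mem measurableSet_Ioc] with t ht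
  exact hbd t (Ioc_subset_Icc_self ht)

lemma Setting.vs_nonneg {d : ℕ} (S : Setting d) (x : Pt d) : 0 ≤ S.vs x := kruzkov_nonneg _
lemma Setting.vs_le_one {d : ℕ} (S : Setting d) (x : Pt d) : S.vs x ≤ 1 := kruzkov_le_one _
lemma Setting.vd_nonneg {d : ℕ} (S : Setting d) (x : Pt d) : 0 ≤ S.vd x := kruzkov_nonneg _
lemma Setting.vd_le_one {d : ℕ} (S : Setting d) (x : Pt d) : S.vd x ≤ 1 := kruzkov_le_one _

lemma Setting.Fv_nonneg {d : ℕ} (S : Setting d) (x : Pt d) : 0 ≤ S.Fv x := by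
  have h1 := S.vs_nonneg x; have h2 := S.vs_le_one x
  have h3 := S.vd_nonneg x; have h4 := S.vd_le_one x
  unfold Setting.Fv; nlinarith

lemma Setting.vStar_le_vd {d : ℕ} (S : Setting d) {p : Pt d} (hp : p ∈ S.Ksrc) :
    S.vStar ≤ S.vd p :=
  csInf_le ⟨0, fun b ⟨z, _, hz⟩ => hz ▸ S.vd_nonneg z⟩ ⟨p, hp, rfl⟩

lemma Setting.vStar_le_one {d : ℕ} (S : Setting d) : S.vStar ≤ 1 := by
  obtain ⟨p, hp⟩ := S.hKsrcNe
  exact (S.vStar_le_vd hp).trans (S.vd_le_one p)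

lemma Setting.vStar_le_Fv {d : ℕ} (S : Setting d) {x : Pt d} (hx : x ∈ closure S.Ω) :
    S.vStar ≤ S.Fv x := by
  have hvs0 := S.vs_nonneg x; have hvs1 := S.vs_le_one x
  have hvd0 := S.vd_nonneg x; have hvd1 := S.vd_le_one x
  rcases eq_or_lt_of_le hvs1 with h1 | hvslt
  · have hFv1 : S.Fv x = 1 := by unfold Setting.Fv; rw [h1]; ring
    rw [hFv1]; exact S.vStar_le_one
  rcases eq_or_lt_of_le hvd1 with h2 | hvdlt
  · have hFv1 : S.Fv x = 1 := by unfold Setting.Fv; rw [h2]; ring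
    rw [hFv1]; exact S.vStar_le_one
  refine le_of_forall_pos_le_add ?_
  intro ε hε
  set ε' := min (ε/2) (min ((1 - S.vs x)/2) ((1 - S.vd x)/2)) with hε'def
  have hε'pos : 0 < ε' := lt_min (by positivity) (lt_min (by linarith) (by linarith))
  have hε'1 : ε' ≤ ε/2 := min_le_left _ _
  have hε'2 : ε' ≤ (1 - S.vs x)/2 := (min_le_right _ _).trans (min_le_left _ _)
  have hε'3 : ε' ≤ (1 - S.vd x)/2 := (min_le_right _ _).trans (min_le_right _ _)
  obtain ⟨τ₁, hτ₁R, hτ₁⟩ := exists_approx (K := closure S.Ω) (f := S.f) (σ := -1)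
    (tgt := S.Ksrc) (x := x) hvslt hε'pos
  obtain ⟨τ₂, hτ₂R, hτ₂⟩ := exists_approx (K := closure S.Ω) (f := S.f) (σ := 1)
    (tgt := S.Kdst) (x := x) hvdlt hε'pos
  have hτ₁' : 1 - Real.exp (-τ₁) < S.vs x + ε' := hτ₁
  have hτ₂' : 1 - Real.exp (-τ₂) < S.vd x + ε' := hτ₂
  obtain ⟨y₁, ⟨α₁, h₁⟩, hend₁⟩ := hτ₁R
  obtain ⟨y₂, ⟨α₂, h₂⟩, hend₂⟩ := hτ₂R
  have hrev0 := traj_reverse h₁ (S.traj_integrable h₁)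
  have hrev : IsTrajCtrl (closure S.Ω) S.f 1 (y₁ τ₁) τ₁ (fun s => y₁ (τ₁ - s))
      (fun s => α₁ (τ₁ - s)) := by simpa using hrev0
  have hstart : (fun s => y₁ (τ₁ - s)) τ₁ = x := by simp [h₁.2.1]
  have h₂' : IsTrajCtrl (closure S.Ω) S.f 1 ((fun s => y₁ (τ₁ - s)) τ₁) τ₂ y₂ α₂ := by
    rw [hstart]; exact h₂
  obtain ⟨hcat, hcend⟩ := traj_concat hrev h₂' (S.traj_integrable hrev) (S.traj_integrable h₂)
  have hreach : τ₁ + τ₂ ∈ reachTimes (closure S.Ω) S.f 1 S.Kdst (y₁ τ₁) := by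
    refine ⟨_, ⟨_, hcat⟩, ?_⟩
    beta_reduce
    beta_reduce at hcend
    rw [hcend]
    exact hend₂
  have hvdp : S.vd (y₁ τ₁) ≤ 1 - Real.exp (-(τ₁ + τ₂)) := val_le_of_mem hreach
  have hvstar : S.vStar ≤ S.vd (y₁ τ₁) := S.vStar_le_vd hend₁
  have hexp : Real.exp (-(τ₁ + τ₂)) = Real.exp (-τ₁) * Real.exp (-τ₂) := by
    rw [← Real.exp_add]; ring_nf
  have hA : 0 < 1 - S.vs x - ε' := by linarith
  have hB : 0 < 1 - S.vd x - ε' := by linarith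
  have he₁ : 1 - S.vs x - ε' < Real.exp (-τ₁) := by linarith
  have he₂ : 1 - S.vd x - ε' < Real.exp (-τ₂) := by linarith
  have hprod : (1 - S.vs x - ε') * (1 - S.vd x - ε') < Real.exp (-τ₁) * Real.exp (-τ₂) :=
    mul_lt_mul'' he₁ he₂ hA.le hB.le
  unfold Setting.Fv
  nlinarith [hvstar, hvdp, hexp, hprod, hε'pos, hε'1, hvs0, hvd0,
    mul_nonneg hε'pos.le hvs0, mul_nonneg hε'pos.le hvd0, sq_nonneg ε']

lemma Setting.Fv_eq_on_Gamma {d : ℕ} (S : Setting d) {x : Pt d} (hx : x ∈ S.GammaFwd) :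
    x ∈ closure S.Ω ∧ S.Fv x = S.vStar := by
  rw [Setting.GammaFwd, mem_iUnion₂] at hx
  obtain ⟨x₀, hx₀, hxg⟩ := hx
  obtain ⟨τ, y, ⟨α, hy⟩, hend, hopt, t, ht, hxy⟩ := hxg
  have hxK : x ∈ closure S.Ω := by rw [hxy]; exact hy.2.2.1 t ht
  refine ⟨hxK, ?_⟩
  have hvdx₀ : S.vd x₀ = S.vStar := by
    refine le_antisymm ?_ (S.vStar_le_vd hx₀.1)
    refine le_csInf (S.hKsrcNe.image _) ?_
    rintro b ⟨z, hz, rfl⟩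
    exact hx₀.2 z hz
  have hτ0 : 0 ≤ τ := hy.1
  have hvdτ : S.vd x₀ = 1 - Real.exp (-τ) := by
    rw [show S.vd x₀ = kruzkov (minTime (closure S.Ω) S.f 1 S.Kdst x₀) from rfl, ← hopt,
      kruzkov_ofReal hτ0]
  have hres := traj_restrict hy ht
  have hrev0 := traj_reverse hres (S.traj_integrable hres)
  rw [← hxy] at hrev0
  have hreach1 : t ∈ reachTimes (closure S.Ω) S.f (-1) S.Ksrc x :=
    ⟨_, ⟨_, hrev0⟩, by simpa [hy.2.1] using hx₀.1⟩
  have hvsx : S.vs x ≤ 1 - Real.exp (-t) := val_le_of_mem hreach1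
  have hsh := traj_shift hy (S.traj_integrable hy) ht
  rw [← hxy] at hsh
  have hreach2 : τ - t ∈ reachTimes (closure S.Ω) S.f 1 S.Kdst x := by
    refine ⟨_, ⟨_, hsh⟩, ?_⟩
    show y (t + (τ - t)) ∈ S.Kdst
    rw [show t + (τ - t) = τ by ring]
    exact hend
  have hvdx : S.vd x ≤ 1 - Real.exp (-(τ - t)) := val_le_of_mem hreach2
  have hlow := S.vStar_le_Fv hxK
  have hexp : Real.exp (-t) * Real.exp (-(τ - t)) = Real.exp (-τ) := by
    rw [← Real.exp_add]; ring_nf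
  have hvs0 := S.vs_nonneg x; have hvd0 := S.vd_nonneg x
  have h1 : Real.exp (-t) ≤ 1 - S.vs x := by linarith
  have h2 : Real.exp (-(τ - t)) ≤ 1 - S.vd x := by linarith
  have hprod : Real.exp (-t) * Real.exp (-(τ - t)) ≤ (1 - S.vs x) * (1 - S.vd x) :=
    mul_le_mul h1 h2 (Real.exp_pos _).le (by linarith [Real.exp_pos (-t)])
  have hup : S.Fv x ≤ S.vStar := by
    rw [← hvdx₀, hvdτ]; unfold Setting.Fv; nlinarith [hprod, hexp]
  linarith [hlow, hup]

end AuxLemmas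

/-- If `Γ*` is nonempty then `v* = inf_{cl Ω} F_v`, the infimum being attained at
every point of `Γ*`; and if optimal trajectories exist from every starting point (for both the
forward and the reverse problems), then `F_v(x) = v*` iff `x ∈ Γ*`, for `x ∈ cl Ω`. -/
theorem vStar_eq_inf_Fv {d : ℕ} (S : Setting d)
    (hvd : ContinuousOn S.vd (closure S.Ω)) (hvs : ContinuousOn S.vs (closure S.Ω))
    (hne : S.GammaFwd.Nonempty) :
    S.vStar = sInf (S.Fv '' closure S.Ω) ∧
    (∀ x ∈ S.GammaFwd, S.Fv x = S.vStar) ∧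
    ((∀ x ∈ closure S.Ω,
        (∃ τ y, IsTraj (closure S.Ω) S.f 1 x τ y ∧ y τ ∈ S.Kdst ∧
          ENNReal.ofReal τ = S.Td x) ∧
        (∃ τ y, IsTraj (closure S.Ω) S.f (-1) x τ y ∧ y τ ∈ S.Ksrc ∧
          ENNReal.ofReal τ = S.Ts x)) →
      ∀ x ∈ closure S.Ω, (S.Fv x = S.vStar ↔ x ∈ S.GammaFwd)) := by
  obtain ⟨xg, hxg⟩ := hne
  obtain ⟨hxgK, hxgFv⟩ := S.Fv_eq_on_Gamma hxg
  refine ⟨?_, fun x hx => (S.Fv_eq_on_Gamma hx).2, ?_⟩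
  · apply le_antisymm
    · refine le_csInf ⟨S.Fv xg, mem_image_of_mem _ hxgK⟩ ?_
      rintro b ⟨z, hz, rfl⟩
      exact S.vStar_le_Fv hz
    · refine csInf_le ⟨0, ?_⟩ ?_
      · rintro b ⟨z, _, rfl⟩; exact S.Fv_nonneg z
      · exact ⟨xg, hxgK, hxgFv⟩
  · intro hExist x hxK
    refine ⟨fun hFv => ?_, fun hx => (S.Fv_eq_on_Gamma hx).2⟩
    obtain ⟨⟨τ₂, y₂, hTr₂, hend₂, hopt₂⟩, ⟨τ₁, y₁, hTr₁, hend₁, hopt₁⟩⟩ := hExist x hxK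
    obtain ⟨α₂, h₂⟩ := hTr₂
    obtain ⟨α₁, h₁⟩ := hTr₁
    have hτ₁0 : 0 ≤ τ₁ := h₁.1
    have hτ₂0 : 0 ≤ τ₂ := h₂.1
    have hvs : S.vs x = 1 - Real.exp (-τ₁) := by
      rw [show S.vs x = kruzkov (S.Ts x) from rfl, ← hopt₁, kruzkov_ofReal hτ₁0]
    have hvd : S.vd x = 1 - Real.exp (-τ₂) := by
      rw [show S.vd x = kruzkov (S.Td x) from rfl, ← hopt₂, kruzkov_ofReal hτ₂0]
    have hrev0 := traj_reverse h₁ (S.traj_integrable h₁)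
    have hrev : IsTrajCtrl (closure S.Ω) S.f 1 (y₁ τ₁) τ₁ (fun s => y₁ (τ₁ - s))
        (fun s => α₁ (τ₁ - s)) := by simpa using hrev0
    have hstart : (fun s => y₁ (τ₁ - s)) τ₁ = x := by simp [h₁.2.1]
    have h₂' : IsTrajCtrl (closure S.Ω) S.f 1 ((fun s => y₁ (τ₁ - s)) τ₁) τ₂ y₂ α₂ := by
      rw [hstart]; exact h₂
    obtain ⟨hcat, hcend⟩ := traj_concat hrev h₂' (S.traj_integrable hrev) (S.traj_integrable h₂)
    beta_reduce at hcend
    have hreach : τ₁ + τ₂ ∈ reachTimes (closure S.Ω) S.f 1 S.Kdst (y₁ τ₁) := by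
      refine ⟨_, ⟨_, hcat⟩, ?_⟩
      beta_reduce
      rw [hcend]
      exact hend₂
    have hvdp : S.vd (y₁ τ₁) ≤ 1 - Real.exp (-(τ₁ + τ₂)) := val_le_of_mem hreach
    have hvstarp : S.vStar ≤ S.vd (y₁ τ₁) := S.vStar_le_vd hend₁
    have hexp : Real.exp (-(τ₁ + τ₂)) = Real.exp (-τ₁) * Real.exp (-τ₂) := by
      rw [← Real.exp_add]; ring_nf
    have hFveq : S.vStar = 1 - Real.exp (-(τ₁ + τ₂)) := by
      rw [← hFv]; unfold Setting.Fv; rw [hvs, hvd, hexp]; ring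
    have hvdpeq : S.vd (y₁ τ₁) = S.vStar :=
      le_antisymm (by rw [hFveq]; exact hvdp) hvstarp
    have hTd : S.Td (y₁ τ₁) = ENNReal.ofReal (τ₁ + τ₂) := by
      apply kruzkov_inj
      rw [show kruzkov (S.Td (y₁ τ₁)) = S.vd (y₁ τ₁) from rfl, hvdpeq, hFveq,
        kruzkov_ofReal (by linarith)]
    have hXsrc : y₁ τ₁ ∈ S.Xsrc :=
      ⟨hend₁, fun z hz => by rw [hvdpeq]; exact S.vStar_le_vd hz⟩
    rw [Setting.GammaFwd, mem_iUnion₂]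
    refine ⟨y₁ τ₁, hXsrc, τ₁ + τ₂, _, ⟨_, hcat⟩, ?_, hTd.symm, τ₁, ⟨hτ₁0, by linarith⟩, ?_⟩
    · beta_reduce
      rw [hcend]
      exact hend₂
    · simp [h₁.2.1]
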